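/- arXiv:1306.3826 — 3 statements merged into one kernel-verified Lean document; each statement's English description precedes it below -/
import Mathlib

section
/- If a holomorphic function b on the unit disc is a multiplier of the Bloch space (i.e., b·f ∈ B(D) for all f ∈ B(D) with ‖bf‖_B ≤ C‖f‖_B), then b is bounded on the disc and satisfies sup_{z∈D}(1-|z|²)·log(2/(1-|z|²))·|b'(z)| < ∞. -/
open Complex

/-- Necessity: a multiplier `b` of the Bloch space of the disc is bounded and
satisfies the logarithmic Bloch condition. -/
theorem bloch_multiplier_necessity (b : ℂ → ℂ)
    (hb : DifferentiableOn ℂ b {z : ℂ | ‖z‖ < 1})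
    (C : ℝ)
    (hmul : ∀ f : ℂ → ℂ, DifferentiableOn ℂ f {z : ℂ | ‖z‖ < 1} →
      ∀ B : ℝ,
        (∀ z : ℂ, ‖z‖ < 1 →
          ‖f 0‖ + (1 - ‖z‖ ^ 2) * ‖deriv f z‖ ≤ B) →
        ∀ z : ℂ, ‖z‖ < 1 →
          ‖(b * f) 0‖ + (1 - ‖z‖ ^ 2) * ‖deriv (b * f) z‖
            ≤ C * B) :
    (∃ M : ℝ, ∀ z : ℂ, ‖z‖ < 1 → ‖b z‖ ≤ M) ∧
    (∃ M : ℝ, ∀ z : ℂ, ‖z‖ < 1 →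
      (1 - ‖z‖ ^ 2) * Real.log (2 / (1 - ‖z‖ ^ 2)) *
        ‖deriv b z‖ ≤ M) := by
  have hopen : IsOpen {z : ℂ | ‖z‖ < 1} :=
    isOpen_lt continuous_norm continuous_const
  have hbAt : ∀ z : ℂ, ‖z‖ < 1 → DifferentiableAt ℂ b z := fun z hz =>
    (hb z hz).differentiableAt (hopen.mem_nhds hz)
  have hmulabs : ∀ w z : ℂ, ‖w‖ < 1 → ‖z‖ < 1 →
      ‖(starRingEnd ℂ) w * z‖ ≤ ‖z‖ := by
    intro w z hw hz
    rw [norm_mul, Complex.norm_conj]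
    calc ‖w‖ * ‖z‖ ≤ 1 * ‖z‖ :=
          mul_le_mul_of_nonneg_right hw.le (norm_nonneg z)
      _ = ‖z‖ := one_mul _
  have hdenabs : ∀ w z : ℂ, ‖w‖ < 1 → ‖z‖ < 1 →
      1 - ‖z‖ ≤ ‖1 - (starRingEnd ℂ) w * z‖ := by
    intro w z hw hz
    have h1 := hmulabs w z hw hz
    have h2 : ‖(1 : ℂ)‖ - ‖(starRingEnd ℂ) w * z‖ ≤ ‖1 - (starRingEnd ℂ) w * z‖ :=
      norm_sub_norm_le _ _
    simp only [norm_one] at h2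
    linarith
  have hden : ∀ w z : ℂ, ‖w‖ < 1 → ‖z‖ < 1 →
      (1 : ℂ) - (starRingEnd ℂ) w * z ≠ 0 := by
    intro w z hw hz h
    have := hdenabs w z hw hz
    rw [h] at this
    simp at this
    linarith
  -- Part 1 : boundedness
  have part1 : ∀ w : ℂ, ‖w‖ < 1 → ‖b w‖ ≤ C * 2 := by
    intro w hw
    set c : ℂ := (starRingEnd ℂ) w with hc
    have hcw : c * w = (Complex.normSq w : ℂ) := by
      rw [hc, mul_comm]; exact Complex.mul_conj w
    have hnw : Complex.normSq w < 1 := by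
      rw [← Complex.sq_norm]; nlinarith [norm_nonneg w]
    have hnw0 : 0 < 1 - Complex.normSq w := by linarith
    set f : ℂ → ℂ := fun z => (w - z) / (1 - c * z) with hf
    have hfd : ∀ z : ℂ, ‖z‖ < 1 →
        HasDerivAt f (((Complex.normSq w : ℂ) - 1) / (1 - c * z) ^ 2) z := by
      intro z hz
      have h1 : HasDerivAt (fun z : ℂ => w - z) (-1) z := (hasDerivAt_id z).const_sub w
      have h2 : HasDerivAt (fun z : ℂ => (1 : ℂ) - c * z) (-c) z := by
        simpa using ((hasDerivAt_id z).const_mul c).const_sub (1 : ℂ)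
      have h3 := h1.div h2 (hden w z hw hz)
      refine h3.congr_deriv ?_
      rw [← hcw]
      ring
    have hfdiff : DifferentiableOn ℂ f {z : ℂ | ‖z‖ < 1} := fun z hz =>
      ((hfd z hz).differentiableAt).differentiableWithinAt
    have hbound : ∀ z : ℂ, ‖z‖ < 1 →
        ‖f 0‖ + (1 - ‖z‖ ^ 2) * ‖deriv f z‖ ≤ 2 := by
      intro z hz
      have hdz : deriv f z = ((Complex.normSq w : ℂ) - 1) / (1 - c * z) ^ 2 :=
        (hfd z hz).deriv
      have hf0 : ‖f 0‖ = ‖w‖ := by simp [hf]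
      have key : (1 - Complex.normSq z) * (1 - Complex.normSq w) + Complex.normSq (w - z)
          = Complex.normSq (1 - c * z) := by
        simp only [hc, Complex.normSq_apply, Complex.sub_re, Complex.sub_im, Complex.mul_re,
          Complex.mul_im, Complex.conj_re, Complex.conj_im, Complex.one_re, Complex.one_im]
        ring
      have hdabs : ‖deriv f z‖ =
          (1 - Complex.normSq w) / ‖1 - c * z‖ ^ 2 := by
        rw [hdz, norm_div, norm_pow]
        congr 1
        have h4 : (Complex.normSq w : ℂ) - 1 = ((Complex.normSq w - 1 : ℝ) : ℂ) := by
          push_cast; ring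
        rw [h4, Complex.norm_real, Real.norm_eq_abs, abs_of_nonpos (by linarith)]
        ring
      have hds : ‖1 - c * z‖ ^ 2 = Complex.normSq (1 - c * z) :=
        Complex.sq_norm _
      have hpos : 0 < Complex.normSq (1 - c * z) := by
        rw [Complex.normSq_pos]; exact hden w z hw hz
      have hzz : ‖z‖ ^ 2 = Complex.normSq z := Complex.sq_norm z
      have h5 : (1 - ‖z‖ ^ 2) * ‖deriv f z‖ ≤ 1 := by
        rw [hdabs, hds, hzz, ← mul_div_assoc]
        exact (div_le_one hpos).mpr (by nlinarith [Complex.normSq_nonneg (w - z)])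
      rw [hf0]
      linarith
    have h := hmul f hfdiff 2 hbound w hw
    -- compute deriv (b*f) at w
    have hbf : deriv (b * f) w = deriv b w * f w + b w * deriv f w := by
      rw [show (b * f) = fun y => b y * f y from rfl]
      exact deriv_mul (hbAt w hw) ((hfd w hw).differentiableAt)
    have hfw : f w = 0 := by simp [hf]
    have hdw : 1 - c * w = ((1 - Complex.normSq w : ℝ) : ℂ) := by
      rw [hcw]; push_cast; ring
    have hderw : ‖deriv f w‖ = 1 / (1 - Complex.normSq w) := by
      rw [(hfd w hw).deriv, norm_div, norm_pow, hdw, Complex.norm_real, Real.norm_eq_abs,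
        abs_of_pos hnw0]
      have h4 : (Complex.normSq w : ℂ) - 1 = ((Complex.normSq w - 1 : ℝ) : ℂ) := by
        push_cast; ring
      rw [h4, Complex.norm_real, Real.norm_eq_abs, abs_of_nonpos (by linarith)]
      field_simp
      ring
    have hww : ‖w‖ ^ 2 = Complex.normSq w := Complex.sq_norm w
    have hbfabs : (1 - ‖w‖ ^ 2) * ‖deriv (b * f) w‖
        = ‖b w‖ := by
      rw [hbf, hfw, mul_zero, zero_add, norm_mul, hderw, hww]
      field_simp
    have habs0 : 0 ≤ ‖(b * f) 0‖ := norm_nonneg _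
    linarith [h, habs0, hbfabs]
  refine ⟨⟨C * 2, part1⟩, ⟨C * (Real.log 2 + 2) + C * 2, ?_⟩⟩
  intro w hw
  set c : ℂ := (starRingEnd ℂ) w with hc
  have hcw : c * w = (Complex.normSq w : ℂ) := by
    rw [hc, mul_comm]; exact Complex.mul_conj w
  have hnw : Complex.normSq w < 1 := by
    rw [← Complex.sq_norm]; nlinarith [norm_nonneg w]
  have hnw0 : 0 < 1 - Complex.normSq w := by linarith
  set g : ℂ → ℂ := fun z => Complex.log (2 / (1 - c * z)) with hg
  have hgd : ∀ z : ℂ, ‖z‖ < 1 → HasDerivAt g (c / (1 - c * z)) z := by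
    intro z hz
    have hd0 := hden w z hw hz
    have h2 : HasDerivAt (fun z : ℂ => (1 : ℂ) - c * z) (-c) z := by
      simpa using ((hasDerivAt_id z).const_mul c).const_sub (1 : ℂ)
    have hq : HasDerivAt (fun z : ℂ => 2 / (1 - c * z))
        ((0 * (1 - c * z) - 2 * (-c)) / (1 - c * z) ^ 2) z :=
      (hasDerivAt_const z 2).div h2 hd0
    have hslit : (2 : ℂ) / (1 - c * z) ∈ Complex.slitPlane := by
      rw [Complex.mem_slitPlane_iff]
      left
      have hre : ((2 : ℂ) / (1 - c * z)).re
          = 2 * (1 - c * z).re / Complex.normSq (1 - c * z) := by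
        rw [div_eq_mul_inv, Complex.mul_re, Complex.inv_re, Complex.inv_im]
        simp
        ring
      rw [hre]
      have hre2 : 0 < (1 - c * z).re := by
        have h3 : (c * z).re ≤ ‖c * z‖ := Complex.re_le_norm _
        have h4 := hmulabs w z hw hz
        rw [← hc] at h4
        have : (1 - c * z).re = 1 - (c * z).re := by simp
        rw [this]
        linarith
      have hpos : 0 < Complex.normSq (1 - c * z) := by
        rw [Complex.normSq_pos]; exact hd0
      positivity
    have h5 := hq.clog hslit
    have hgr : ((0 * (1 - c * z) - 2 * (-c)) / (1 - c * z) ^ 2) / (2 / (1 - c * z))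
        = c / (1 - c * z) := by
      field_simp
      ring
    rw [hgr] at h5
    exact h5
  have hgdiff : DifferentiableOn ℂ g {z : ℂ | ‖z‖ < 1} := fun z hz =>
    ((hgd z hz).differentiableAt).differentiableWithinAt
  have hbound : ∀ z : ℂ, ‖z‖ < 1 →
      ‖g 0‖ + (1 - ‖z‖ ^ 2) * ‖deriv g z‖
        ≤ Real.log 2 + 2 := by
    intro z hz
    have hg0 : ‖g 0‖ = Real.log 2 := by
      have h0 : g 0 = Complex.log 2 := by simp [hg]
      have h1 : Complex.log ((2 : ℂ)) = ((Real.log 2 : ℝ) : ℂ) := by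
        rw [show ((2 : ℂ)) = ((2 : ℝ) : ℂ) by norm_num]
        exact (Complex.ofReal_log (by norm_num : (0:ℝ) ≤ 2)).symm
      rw [h0, h1, Complex.norm_real, Real.norm_eq_abs, _root_.abs_of_nonneg (Real.log_nonneg one_le_two)]
    have hdz : deriv g z = c / (1 - c * z) := (hgd z hz).deriv
    have hzn : 0 < 1 - ‖z‖ := by linarith
    have habs : ‖deriv g z‖ ≤ 1 / (1 - ‖z‖) := by
      rw [hdz, norm_div, hc, Complex.norm_conj]
      exact div_le_div₀ zero_le_one hw.le hzn (by rw [← hc]; exact hdenabs w z hw hz)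
    have hz2 : 0 ≤ 1 - ‖z‖ ^ 2 := by nlinarith [norm_nonneg z]
    have h6 : (1 - ‖z‖ ^ 2) * ‖deriv g z‖
        ≤ (1 - ‖z‖ ^ 2) * (1 / (1 - ‖z‖)) :=
      mul_le_mul_of_nonneg_left habs hz2
    have h7 : (1 - ‖z‖ ^ 2) * (1 / (1 - ‖z‖))
        = 1 + ‖z‖ := by
      field_simp
      ring
    rw [hg0]
    rw [h7] at h6
    linarith
  have h := hmul g hgdiff (Real.log 2 + 2) hbound w hw
  have hbg : deriv (b * g) w = deriv b w * g w + b w * deriv g w := by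
    rw [show (b * g) = fun y => b y * g y from rfl]
    exact deriv_mul (hbAt w hw) ((hgd w hw).differentiableAt)
  have hww : ‖w‖ ^ 2 = Complex.normSq w := Complex.sq_norm w
  have hdw : (1 : ℂ) - c * w = ((1 - Complex.normSq w : ℝ) : ℂ) := by
    rw [hcw]; push_cast; ring
  have harg : (2 : ℂ) / (1 - c * w) = ((2 / (1 - Complex.normSq w) : ℝ) : ℂ) := by
    rw [hdw]; push_cast; ring
  have hargpos : (1 : ℝ) ≤ 2 / (1 - Complex.normSq w) := by
    rw [le_div_iff₀ hnw0]
    nlinarith [Complex.normSq_nonneg w]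
  have hgw : ‖g w‖ = Real.log (2 / (1 - Complex.normSq w)) := by
    have h0 : g w = ((Real.log (2 / (1 - Complex.normSq w)) : ℝ) : ℂ) := by
      rw [hg]
      simp only
      rw [harg]
      exact (Complex.ofReal_log (by positivity)).symm
    rw [h0, Complex.norm_real, Real.norm_eq_abs, _root_.abs_of_nonneg (Real.log_nonneg hargpos)]
  have hgw' : ‖deriv g w‖ = ‖w‖ / (1 - Complex.normSq w) := by
    rw [(hgd w hw).deriv, norm_div, hdw, Complex.norm_real, Real.norm_eq_abs, abs_of_pos hnw0,
      hc, Complex.norm_conj]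
  have hw2 : 0 < 1 - ‖w‖ ^ 2 := by rw [hww]; linarith
  have tri : ‖deriv b w * g w‖
      ≤ ‖deriv b w * g w + b w * deriv g w‖ + ‖b w * deriv g w‖ := by
    have h8 := norm_add_le (deriv b w * g w + b w * deriv g w) (-(b w * deriv g w))
    simpa using h8
  have hterm2 : (1 - ‖w‖ ^ 2) * ‖b w * deriv g w‖ ≤ C * 2 := by
    rw [norm_mul, hgw', hww]
    have h9 : ‖b w‖ * (‖w‖ / (1 - Complex.normSq w))
        * (1 - Complex.normSq w) = ‖b w‖ * ‖w‖ := by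
      field_simp
    have h10 : ‖b w‖ * ‖w‖ ≤ (C * 2) * 1 := by
      have hC2 : 0 ≤ C * 2 := le_trans (norm_nonneg _) (part1 w hw)
      exact mul_le_mul (part1 w hw) hw.le (norm_nonneg w) hC2
    nlinarith [norm_nonneg (b w), norm_nonneg w]
  have hterm1 : (1 - ‖w‖ ^ 2) * ‖deriv (b * g) w‖
      ≤ C * (Real.log 2 + 2) := by
    have h11 : 0 ≤ ‖(b * g) 0‖ := norm_nonneg _
    linarith
  have hmain : (1 - ‖w‖ ^ 2) * (‖deriv b w‖ * ‖g w‖)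
      ≤ C * (Real.log 2 + 2) + C * 2 := by
    have h12 : (1 - ‖w‖ ^ 2) * ‖deriv b w * g w‖
        ≤ C * (Real.log 2 + 2) + C * 2 := by
      have h13 := mul_le_mul_of_nonneg_left tri hw2.le
      rw [mul_add] at h13
      rw [← hbg] at h13
      calc (1 - ‖w‖ ^ 2) * ‖deriv b w * g w‖
          ≤ (1 - ‖w‖ ^ 2) * ‖deriv (b * g) w‖
            + (1 - ‖w‖ ^ 2) * ‖b w * deriv g w‖ := h13
        _ ≤ C * (Real.log 2 + 2) + C * 2 := add_le_add hterm1 hterm2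
    rw [← norm_mul]
    exact h12
  rw [hgw] at hmain
  calc (1 - ‖w‖ ^ 2) * Real.log (2 / (1 - ‖w‖ ^ 2))
        * ‖deriv b w‖
      = (1 - ‖w‖ ^ 2) * (‖deriv b w‖
        * Real.log (2 / (1 - Complex.normSq w))) := by rw [hww]; ring
    _ ≤ C * (Real.log 2 + 2) + C * 2 := hmain
end

section
/- Let J = {j_1,…,j_l} be a nonempty subset of {1,…,n}. For every f in the sum Bloch space 𝔹(D^n) and every z ∈ D^n, (∏_{k∈J}(1-|z_k|²))·|∂^l f/∂z_{j_1}⋯∂z_{j_l}(z)| ≤ C‖f‖_𝔹 for a constant C independent of f and z. -/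
/-- The open unit polydisc in `ℂⁿ`. -/
def polydisc (n : ℕ) : Set (Fin n → ℂ) := {z | ∀ j, ‖z j‖ < 1}

/-- Partial (complex) derivative in the `j`-th variable. -/
noncomputable def pderivAt (n : ℕ) (j : Fin n) (f : (Fin n → ℂ) → ℂ) :
    (Fin n → ℂ) → ℂ :=
  fun z => deriv (fun w : ℂ => f (Function.update z j w)) (z j)

/-- Iterated mixed partial derivative, once in each variable of the list. -/
noncomputable def mderiv (n : ℕ) : List (Fin n) → ((Fin n → ℂ) → ℂ) → ((Fin n → ℂ) → ℂ)
  | [], f => f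
  | j :: l, f => pderivAt n j (mderiv n l f)

/-- The product-Bloch quantity `|f(0)| + ∏ⱼ(1-|zⱼ|²)·|∂ⁿf/∂z₁⋯∂zₙ(z)|`. -/
noncomputable def prodBlochExpr (n : ℕ) (f : (Fin n → ℂ) → ℂ) (z : Fin n → ℂ) : ℝ :=
  ‖f 0‖ +
    (∏ j, (1 - ‖z j‖ ^ 2)) * ‖mderiv n (List.finRange n) f z‖

/-- The sum-Bloch quantity `|f(0)| + Σⱼ(1-|zⱼ|²)·|∂f/∂zⱼ(z)|`. -/
noncomputable def sumBlochExpr (n : ℕ) (f : (Fin n → ℂ) → ℂ) (z : Fin n → ℂ) : ℝ :=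
  ‖f 0‖ +
    ∑ j, (1 - ‖z j‖ ^ 2) * ‖pderivAt n j f z‖

open Metric Set Function

lemma mem_polydisc_update {n : ℕ} {z : Fin n → ℂ} (hz : z ∈ polydisc n) (j : Fin n) {w : ℂ}
    (hw : ‖w‖ < 1) : Function.update z j w ∈ polydisc n := by
  intro k
  rcases eq_or_ne k j with rfl | hk
  · simpa
  · simpa [Function.update_of_ne hk] using hz k

lemma cauchy_bound {G : ℂ → ℂ} {c : ℂ} {r A : ℝ} (hr : 0 < r)
    (hG : DifferentiableOn ℂ G (ball c (2*r)))
    (hA : ∀ ξ ∈ ball c (2*r), ‖G ξ‖ ≤ A) :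
    ‖deriv G c‖ ≤ A / r := by
  refine Complex.norm_deriv_le_of_forall_mem_sphere_norm_le hr ?_ ?_
  · refine (hG.mono ?_).diffContOnCl
    rw [closure_ball c hr.ne']
    exact (closedBall_subset_ball (by linarith))
  · intro ξ hξ
    refine hA ξ ?_
    rw [mem_sphere_iff_norm] at hξ
    rw [mem_ball_iff_norm]
    rw [hξ]; linarith

lemma quot_bound {G : ℂ → ℂ} {c : ℂ} {r A : ℝ} (hr : 0 < r)
    (hG : DifferentiableOn ℂ G (ball c (4*r)))
    (hA : ∀ ξ ∈ ball c (4*r), ‖G ξ‖ ≤ A) {h : ℂ}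
    (hh : ‖h‖ ≤ r) (hh0 : h ≠ 0) :
    ‖(G (c+h) - G c)/h - deriv G c‖ ≤ ‖h‖ * (2*A/r^2) := by
  have habs : 0 < ‖h‖ := by
    simpa [norm_pos_iff] using hh0
  have hG' : DifferentiableOn ℂ (deriv G) (ball c (4*r)) :=
    ((hG.analyticOnNhd isOpen_ball).deriv).differentiableOn
  have d1 : ∀ ξ ∈ closedBall c (3*r), ‖deriv G ξ‖ ≤ 2*A/r := by
    intro ξ hξ
    rw [mem_closedBall] at hξ
    have hsub : ball ξ (2*(r/2)) ⊆ ball c (4*r) := by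
      intro ζ hζ
      rw [mem_ball] at hζ ⊢
      have := dist_triangle ζ ξ c
      linarith
    have := cauchy_bound (by positivity : (0:ℝ) < r/2) (hG.mono hsub)
      (fun ζ hζ => hA ζ (hsub hζ))
    calc ‖deriv G ξ‖ ≤ A / (r/2) := this
      _ = 2*A/r := by field_simp
  have d2 : ∀ η ∈ closedBall c r, ‖deriv (deriv G) η‖ ≤ 2*A/r/r := by
    intro η hη
    rw [mem_closedBall] at hη
    have hsub : ball η (2*r) ⊆ ball c (4*r) := by
      intro ζ hζ
      rw [mem_ball] at hζ ⊢
      have := dist_triangle ζ η c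
      linarith
    have hsub' : ball η (2*r) ⊆ closedBall c (3*r) := by
      intro ζ hζ
      rw [mem_ball] at hζ
      rw [mem_closedBall]
      have := dist_triangle ζ η c
      linarith
    exact cauchy_bound hr (hG'.mono hsub) (fun ζ hζ => d1 ζ (hsub' hζ))
  have hball : closedBall c r ⊆ ball c (4*r) :=
    closedBall_subset_ball (by linarith)
  have d3 : ∀ ξ ∈ closedBall c r,
      ‖deriv G ξ - deriv G c‖ ≤ (2*A/r/r) * ‖ξ - c‖ := by
    intro ξ hξ
    have := (convex_closedBall c r).norm_image_sub_le_of_norm_deriv_le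
      (f := deriv G) (fun x hx => (hG' x (hball hx)).differentiableAt
        (isOpen_ball.mem_nhds (hball hx)))
      (fun x hx => by exact d2 x hx)
      (mem_closedBall_self hr.le) hξ
    simpa using this
  -- MVT for H ξ = G ξ - ξ * deriv G c on closedBall c |h|
  set H : ℂ → ℂ := fun ξ => G ξ - ξ * deriv G c with hH
  have hsub2 : closedBall c (‖h‖) ⊆ closedBall c r :=
    closedBall_subset_closedBall hh
  have hdH : ∀ x ∈ closedBall c (‖h‖), DifferentiableAt ℂ H x := by
    intro x hx
    have hx' : x ∈ ball c (4*r) := hball (hsub2 hx)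
    exact ((hG x hx').differentiableAt (isOpen_ball.mem_nhds hx')).sub
      ((differentiableAt_id.mul_const _))
  have hderivH : ∀ x ∈ closedBall c (‖h‖),
      deriv H x = deriv G x - deriv G c := by
    intro x hx
    have hx' : x ∈ ball c (4*r) := hball (hsub2 hx)
    have h1 : HasDerivAt G (deriv G x) x :=
      ((hG x hx').differentiableAt (isOpen_ball.mem_nhds hx')).hasDerivAt
    have h2 : HasDerivAt (fun ξ : ℂ => ξ * deriv G c) (deriv G c) x := by
      simpa using (hasDerivAt_id x).mul_const (deriv G c)
    exact (h1.sub h2).deriv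
  have mvt := (convex_closedBall c (‖h‖)).norm_image_sub_le_of_norm_deriv_le
    (f := H) (x := c) (y := c + h) hdH
    (C := (2*A/r/r) * ‖h‖)
    (fun x hx => by
      rw [hderivH x hx]
      have hxc : ‖x - c‖ ≤ ‖h‖ := by
        rw [← Complex.dist_eq]; exact mem_closedBall.mp hx
      have hK : 0 ≤ 2*A/r/r := by
        have hA0 : 0 ≤ A := le_trans (norm_nonneg _)
          (hA c (mem_ball_self (by linarith)))
        positivity
      exact le_trans (d3 x (hsub2 hx)) (mul_le_mul_of_nonneg_left hxc hK))
    (mem_closedBall_self (norm_nonneg h))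
    (by rw [mem_closedBall, dist_eq_norm]; simp)
  -- mvt : ‖H (c+h) - H c‖ ≤ K|h| * ‖(c+h) - c‖
  have key : ‖G (c+h) - G c - h * deriv G c‖ ≤
      (2*A/r/r) * ‖h‖ * ‖h‖ := by
    have e1 : H (c+h) - H c = G (c+h) - G c - h * deriv G c := by
      rw [hH]; ring_nf
    have e2 : (c+h) - c = h := by ring
    rw [← e1]
    calc ‖H (c+h) - H c‖ = ‖H (c+h) - H c‖ := rfl
      _ ≤ (2*A/r/r) * ‖h‖ * ‖(c+h) - c‖ := mvt
      _ = (2*A/r/r) * ‖h‖ * ‖h‖ := by rw [e2]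
  have e3 : (G (c+h) - G c)/h - deriv G c = (G (c+h) - G c - h * deriv G c) / h := by
    field_simp
  rw [e3, norm_div]
  rw [div_le_iff₀ habs]
  calc ‖G (c+h) - G c - h * deriv G c‖
      ≤ (2*A/r/r) * ‖h‖ * ‖h‖ := key
    _ = ‖h‖ * (2*A/r^2) * ‖h‖ := by ring

def SH (n : ℕ) (g : (Fin n → ℂ) → ℂ) : Prop :=
  ∀ (j : Fin n) (z : Fin n → ℂ), z ∈ polydisc n →
    DifferentiableOn ℂ (fun w => g (Function.update z j w)) (ball 0 1)

def locB (n : ℕ) (g : (Fin n → ℂ) → ℂ) : Prop :=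
  ∀ ρ : ℝ, 0 ≤ ρ → ρ < 1 → ∃ A : ℝ, 0 ≤ A ∧
    ∀ y : Fin n → ℂ, (∀ k, ‖y k‖ ≤ ρ) → ‖g y‖ ≤ A

lemma abs_lt_one_of_mem_ball {w : ℂ} (hw : w ∈ ball (0:ℂ) 1) : ‖w‖ < 1 := by
  simpa [Complex.dist_eq] using mem_ball.mp hw

lemma SH_base {n : ℕ} {f : (Fin n → ℂ) → ℂ} (hf : DifferentiableOn ℂ f (polydisc n)) :
    SH n f := by
  intro j z hz
  have hu : Differentiable ℂ (fun w : ℂ => Function.update z j w) := by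
    have he : (fun w : ℂ => Function.update z j w) =
        fun w k => if k = j then w else z k := by
      funext w k
      simp [Function.update_apply]
    rw [he]
    apply differentiable_pi.mpr
    intro k
    rcases eq_or_ne k j with rfl | hk
    · simpa using differentiable_id
    · simpa [hk] using (differentiable_const (z k))
  exact hf.comp hu.differentiableOn
    (fun w hw => mem_polydisc_update hz j (abs_lt_one_of_mem_ball hw))

lemma locB_base {n : ℕ} {f : (Fin n → ℂ) → ℂ} (hf : ContinuousOn f (polydisc n)) :
    locB n f := by
  intro ρ hρ0 hρ1
  set K : Set (Fin n → ℂ) := Set.pi Set.univ (fun _ => closedBall (0:ℂ) ρ) with hK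
  have hKc : IsCompact K := isCompact_univ_pi (fun _ => isCompact_closedBall 0 ρ)
  have hKP : K ⊆ polydisc n := by
    intro y hy k
    have := hy k (Set.mem_univ k)
    rw [mem_closedBall, Complex.dist_eq, sub_zero] at this
    linarith
  obtain ⟨C, hC⟩ := hKc.exists_bound_of_continuousOn (hf.mono hKP)
  refine ⟨max C 0, le_max_right _ _, ?_⟩
  intro y hy
  have hyK : y ∈ K := by
    intro k _
    rw [mem_closedBall, Complex.dist_eq, sub_zero]
    exact hy k
  calc ‖f y‖ = ‖f y‖ := rfl
    _ ≤ C := hC y hyK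
    _ ≤ max C 0 := le_max_left _ _

lemma locB_pderiv {n : ℕ} {g : (Fin n → ℂ) → ℂ} (hSH : SH n g) (hB : locB n g)
    (i : Fin n) : locB n (pderivAt n i g) := by
  intro ρ h0 h1
  obtain ⟨A, hA0, hA⟩ := hB ((1+ρ)/2) (by linarith) (by linarith)
  set r : ℝ := (1-ρ)/4 with hrdef
  have hr : 0 < r := by rw [hrdef]; linarith
  refine ⟨A / r, by positivity, ?_⟩
  intro y hy
  have hyP : y ∈ polydisc n := fun k => lt_of_le_of_lt (hy k) h1
  have hsub : ball (y i) (2*r) ⊆ ball (0:ℂ) 1 := by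
    intro ξ hξ
    rw [mem_ball] at hξ ⊢
    have h2 := dist_triangle ξ (y i) 0
    have h3 : dist (y i) 0 ≤ ρ := by
      rw [Complex.dist_eq, sub_zero]; exact hy i
    rw [hrdef] at hξ; linarith
  refine cauchy_bound hr ((hSH i y hyP).mono hsub) ?_
  intro ξ hξ
  refine hA _ ?_
  intro k
  rcases eq_or_ne k i with rfl | hk
  · rw [Function.update_self]
    rw [mem_ball, Complex.dist_eq] at hξ
    have h4 : ‖ξ‖ ≤ ‖y k‖ + ‖ξ - y k‖ := by
      have := norm_add_le (y k) (ξ - y k)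
      simpa [add_sub_cancel] using this
    have h5 := hy k
    rw [hrdef] at hξ
    linarith
  · rw [Function.update_of_ne hk]
    have := hy k; linarith

lemma SH_pderiv {n : ℕ} {g : (Fin n → ℂ) → ℂ} (hSH : SH n g) (hB : locB n g)
    (i : Fin n) : SH n (pderivAt n i g) := by
  intro j z hz
  rcases eq_or_ne j i with rfl | hji
  · -- same variable: derivative of the slice
    have hS : DifferentiableOn ℂ (fun ξ => g (Function.update z j ξ)) (ball 0 1) := hSH j z hz
    have heq : (fun w => pderivAt n j g (Function.update z j w)) =
        deriv (fun ξ => g (Function.update z j ξ)) := by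
      funext w
      show deriv (fun ξ => g (Function.update (Function.update z j w) j ξ))
        ((Function.update z j w) j) = _
      simp [Function.update_idem]
    rw [heq]
    exact ((hS.analyticOnNhd isOpen_ball).deriv).differentiableOn
  · -- different variables: locally uniform limit of difference quotients
    have hzi : ‖z i‖ < 1 := hz i
    set r : ℝ := (1 - ‖z i‖)/8 with hrdef
    have hr : 0 < r := by rw [hrdef]; linarith
    set h : ℕ → ℂ := fun m => ((r/(m+1) : ℝ) : ℂ) with hhdef
    have habs : ∀ m : ℕ, ‖h m‖ = r/(m+1) := by
      intro m
      rw [hhdef]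
      simp only [Complex.norm_real, Real.norm_eq_abs]
      rw [abs_of_pos (by positivity)]
    have hh0 : ∀ m : ℕ, h m ≠ 0 := by
      intro m hcon
      have h4 := habs m
      rw [hcon] at h4
      simp only [norm_zero] at h4
      have h5 : (0:ℝ) < r / (m+1) := by positivity
      linarith
    have hhr : ∀ m : ℕ, ‖h m‖ ≤ r := by
      intro m
      rw [habs]
      apply div_le_self hr.le
      have : (0:ℝ) ≤ (m:ℝ) := Nat.cast_nonneg m
      linarith
    set Φ : ℂ → ℂ := fun w => pderivAt n i g (Function.update z j w) with hΦdef
    set Φm : ℕ → ℂ → ℂ := fun m w =>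
      (g (Function.update (Function.update z j w) i (z i + h m)) -
        g (Function.update z j w)) / h m with hΦmdef
    have hΦm : ∀ m, DifferentiableOn ℂ (Φm m) (ball 0 1) := by
      intro m
      have hc : ‖z i + h m‖ < 1 := by
        have h4 := norm_add_le (z i) (h m)
        have h5 := hhr m
        rw [hrdef] at h5
        linarith
      have hz' : Function.update z i (z i + h m) ∈ polydisc n := mem_polydisc_update hz i hc
      have d2 : DifferentiableOn ℂ (fun w => g (Function.update z j w)) (ball 0 1) :=
        hSH j z hz
      have d1 : DifferentiableOn ℂ
          (fun w => g (Function.update (Function.update z j w) i (z i + h m))) (ball 0 1) := by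
        have heq : (fun w : ℂ => g (Function.update (Function.update z j w) i (z i + h m))) =
            (fun w => g (Function.update (Function.update z i (z i + h m)) j w)) := by
          funext w
          rw [Function.update_comm hji]
        rw [heq]
        exact hSH j _ hz'
      exact (d1.sub d2).div_const (h m)
    have hconv : TendstoLocallyUniformlyOn Φm Φ Filter.atTop (ball 0 1) := by
      rw [Metric.tendstoLocallyUniformlyOn_iff]
      intro ε hε x hx
      have hx1 : ‖x‖ < 1 := abs_lt_one_of_mem_ball hx
      set δ : ℝ := (1 - ‖x‖)/2 with hδdef
      have hδ : 0 < δ := by rw [hδdef]; linarith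
      set ρ : ℝ := (1 + ‖x‖)/2 with hρdef
      have hne : (Finset.univ : Finset (Fin n)).Nonempty := ⟨i, Finset.mem_univ i⟩
      set s0 : ℝ := Finset.univ.sup' hne (fun k => ‖z k‖) with hs0def
      have hs0 : s0 < 1 := by
        rw [hs0def, Finset.sup'_lt_iff]
        intro k _
        exact hz k
      have hs0k : ∀ k, ‖z k‖ ≤ s0 := fun k =>
        Finset.le_sup' (fun k => ‖z k‖) (Finset.mem_univ k)
      set ρb : ℝ := max (max ρ ((1 + ‖z i‖)/2)) s0 with hρbdef
      have hρb1 : ρb < 1 := by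
        rw [hρbdef]
        apply max_lt (max_lt _ _) hs0
        · rw [hρdef]; linarith
        · linarith
      have hρb0 : 0 ≤ ρb := by
        rw [hρbdef]
        have : (0:ℝ) ≤ ρ := by rw [hρdef]; positivity
        exact le_trans this (le_trans (le_max_left _ _) (le_max_left _ _))
      obtain ⟨A, hA0, hA⟩ := hB ρb hρb0 hρb1
      refine ⟨ball 0 1 ∩ ball x δ, inter_mem_nhdsWithin _ (ball_mem_nhds x hδ), ?_⟩
      have key : ∀ m : ℕ, ∀ w ∈ ball (0:ℂ) 1 ∩ ball x δ,
          ‖Φm m w - Φ w‖ ≤ (r/(m+1)) * (2*A/r^2) := by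
        intro m w hw
        obtain ⟨hw1, hw2⟩ := hw
        have hw1' : ‖w‖ < 1 := abs_lt_one_of_mem_ball hw1
        have hwρ : ‖w‖ ≤ ρ := by
          rw [mem_ball, Complex.dist_eq] at hw2
          have h4 : ‖w‖ ≤ ‖x‖ + ‖w - x‖ := by
            have := norm_add_le x (w - x)
            simpa [add_sub_cancel] using this
          rw [hδdef] at hw2
          rw [hρdef]
          linarith
        have hzw : Function.update z j w ∈ polydisc n := mem_polydisc_update hz j hw1'
        set G : ℂ → ℂ := fun ξ => g (Function.update (Function.update z j w) i ξ) with hGdef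
        have hGd : DifferentiableOn ℂ G (ball (z i) (4*r)) := by
          refine (hSH i _ hzw).mono ?_
          intro ξ hξ
          rw [mem_ball] at hξ ⊢
          rw [Complex.dist_eq] at hξ
          rw [Complex.dist_eq, sub_zero]
          have h4 : ‖ξ‖ ≤ ‖z i‖ + ‖ξ - z i‖ := by
            have := norm_add_le (z i) (ξ - z i)
            simpa [add_sub_cancel] using this
          rw [hrdef] at hξ
          linarith
        have hGA : ∀ ξ ∈ ball (z i) (4*r), ‖G ξ‖ ≤ A := by
          intro ξ hξ
          apply hA
          intro k
          rcases eq_or_ne k i with rfl | hki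
          · rw [Function.update_self]
            rw [mem_ball, Complex.dist_eq] at hξ
            have h4 : ‖ξ‖ ≤ ‖z k‖ + ‖ξ - z k‖ := by
              have := norm_add_le (z k) (ξ - z k)
              simpa [add_sub_cancel] using this
            have h5 : ‖ξ‖ ≤ (1 + ‖z k‖)/2 := by
              rw [hrdef] at hξ
              linarith
            exact le_trans h5 (le_trans (le_max_right _ _) (le_max_left _ _))
          · rw [Function.update_of_ne hki]
            rcases eq_or_ne k j with rfl | hkj
            · rw [Function.update_self]
              exact le_trans hwρ (le_trans (le_max_left _ _) (le_max_left _ _))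
            · rw [Function.update_of_ne hkj]
              exact le_trans (hs0k k) (le_max_right _ _)
        have hq := quot_bound hr hGd hGA (hhr m) (hh0 m)
        have e1 : G (z i) = g (Function.update z j w) := by
          rw [hGdef]
          show g (Function.update (Function.update z j w) i (z i)) = _
          congr 1
          have e : z i = (Function.update z j w) i :=
            (Function.update_of_ne (Ne.symm hji) w z).symm
          rw [e, Function.update_eq_self]
        have e2 : Φ w = deriv G (z i) := by
          show deriv (fun ξ => g (Function.update (Function.update z j w) i ξ))
            ((Function.update z j w) i) = deriv G (z i)
          rw [Function.update_of_ne (Ne.symm hji)]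
        have e3 : Φm m w = (G (z i + h m) - G (z i))/(h m) := by
          rw [e1]
        rw [e3, e2]
        calc ‖(G (z i + h m) - G (z i))/(h m) - deriv G (z i)‖
            ≤ ‖h m‖ * (2*A/r^2) := hq
          _ = (r/(m+1)) * (2*A/r^2) := by rw [habs]
      have htend : Filter.Tendsto (fun m : ℕ => (r/(m+1)) * (2*A/r^2))
          Filter.atTop (nhds 0) := by
        have h1 : Filter.Tendsto (fun m : ℕ => (1:ℝ)/(m+1)) Filter.atTop (nhds 0) :=
          tendsto_one_div_add_atTop_nhds_zero_nat
        have h2 := h1.const_mul (r * (2*A/r^2))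
        rw [mul_zero] at h2
        have heqf : (fun m : ℕ => (r/(m+1)) * (2*A/r^2)) =
            fun m : ℕ => r * (2*A/r^2) * ((1:ℝ)/(m+1)) := by
          funext m
          ring
        rw [heqf]
        exact h2
      filter_upwards [htend.eventually (gt_mem_nhds hε)] with m hm y hy
      rw [Complex.dist_eq]
      calc ‖Φ y - Φm m y‖ = ‖Φm m y - Φ y‖ := by
            rw [norm_sub_rev]
        _ ≤ (r/(m+1)) * (2*A/r^2) := key m y hy
        _ < ε := hm
    exact hconv.differentiableOn (Filter.Eventually.of_forall hΦm) isOpen_ball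

lemma cauchy_step {n : ℕ} {g : (Fin n → ℂ) → ℂ} (hSH : SH n g) {j : Fin n}
    {L : List (Fin n)} (hjL : j ∉ L) {M : ℝ}
    (hbd : ∀ z ∈ polydisc n,
      (L.map fun k => (1 - ‖z k‖^2)).prod * ‖g z‖ ≤ M) :
    ∀ z ∈ polydisc n,
      ((j :: L).map fun k => (1 - ‖z k‖^2)).prod *
        ‖pderivAt n j g z‖ ≤ 4 * M := by
  intro z hz
  have hzj : ‖z j‖ < 1 := hz j
  have hzj0 : 0 ≤ ‖z j‖ := norm_nonneg _
  set Q : ℝ := (L.map fun k => (1 - ‖z k‖^2)).prod with hQdef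
  have hQpos : 0 < Q := by
    rw [hQdef]
    apply List.prod_pos
    intro a ha
    rw [List.mem_map] at ha
    obtain ⟨k, _, rfl⟩ := ha
    have h1 := hz k
    nlinarith [norm_nonneg (z k)]
  set r : ℝ := (1 - ‖z j‖)/2 with hrdef
  have hr : 0 < r := by rw [hrdef]; linarith
  have hM0 : 0 ≤ M := by
    have h1 := hbd z hz
    have h2 : 0 ≤ Q * ‖g z‖ := by positivity
    linarith
  have hder : ‖pderivAt n j g z‖ ≤ (M / Q) / r := by
    apply cauchy_bound hr
    · refine (hSH j z hz).mono ?_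
      intro ξ hξ
      rw [mem_ball] at hξ ⊢
      rw [Complex.dist_eq] at hξ
      rw [Complex.dist_eq, sub_zero]
      have h4 : ‖ξ‖ ≤ ‖z j‖ + ‖ξ - z j‖ := by
        have := norm_add_le (z j) (ξ - z j)
        simpa [add_sub_cancel] using this
      rw [hrdef] at hξ
      linarith
    · intro ξ hξ
      rw [mem_ball, Complex.dist_eq] at hξ
      have h4 : ‖ξ‖ ≤ ‖z j‖ + ‖ξ - z j‖ := by
        have := norm_add_le (z j) (ξ - z j)
        simpa [add_sub_cancel] using this
      have hξ1 : ‖ξ‖ < 1 := by rw [hrdef] at hξ; linarith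
      have hupd : Function.update z j ξ ∈ polydisc n := mem_polydisc_update hz j hξ1
      have hb := hbd _ hupd
      have hQeq : ((L.map fun k =>
          (1 - ‖(Function.update z j ξ) k‖^2)).prod) = Q := by
        rw [hQdef]
        congr 1
        apply List.map_congr_left
        intro k hk
        have hkj : k ≠ j := fun e => hjL (e ▸ hk)
        rw [Function.update_of_ne hkj]
      rw [hQeq] at hb
      rw [le_div_iff₀ hQpos, mul_comm]
      exact hb
  have hpr : ((j :: L).map fun k => (1 - ‖z k‖^2)).prod =
      (1 - ‖z j‖^2) * Q := by
    rw [hQdef, List.map_cons, List.prod_cons]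
  rw [hpr]
  have ha2 : ‖z j‖^2 ≤ 1 := by nlinarith
  have hw0 : 0 ≤ (1 - ‖z j‖^2) * Q := mul_nonneg (by linarith) hQpos.le
  calc (1 - ‖z j‖^2) * Q * ‖pderivAt n j g z‖
      ≤ (1 - ‖z j‖^2) * Q * ((M / Q) / r) :=
        mul_le_mul_of_nonneg_left hder hw0
    _ = 2 * (1 + ‖z j‖) * M := by
        rw [hrdef]
        have h1 : (1 - ‖z j‖) ≠ 0 := by linarith
        field_simp
        ring
    _ ≤ 4 * M := by nlinarith

lemma main_est {n : ℕ} {f : (Fin n → ℂ) → ℂ} (hSH : SH n f) (hB : locB n f) {M : ℝ}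
    (hM : ∀ (j : Fin n) (z : Fin n → ℂ), z ∈ polydisc n →
      (1 - ‖z j‖^2) * ‖pderivAt n j f z‖ ≤ M) :
    ∀ L : List (Fin n), L.Nodup →
      (SH n (mderiv n L f) ∧ locB n (mderiv n L f)) ∧
      (L ≠ [] → ∀ z ∈ polydisc n,
        (L.map fun k => (1 - ‖z k‖^2)).prod *
          ‖mderiv n L f z‖ ≤ 4^(L.length) * M) := by
  intro L
  induction L with
  | nil =>
    intro _
    exact ⟨⟨hSH, hB⟩, fun hc => absurd rfl hc⟩
  | cons i L ih =>
    intro hnd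
    rw [List.nodup_cons] at hnd
    obtain ⟨hiL, hndL⟩ := hnd
    obtain ⟨⟨sh, lb⟩, est⟩ := ih hndL
    refine ⟨⟨SH_pderiv sh lb i, locB_pderiv sh lb i⟩, ?_⟩
    intro _ z hz
    by_cases hL : L = []
    · subst hL
      have hM0 : 0 ≤ M := by
        have h0 : (0 : Fin n → ℂ) ∈ polydisc n := by
          intro k; simp
        have h1 := hM i 0 h0
        have h2 : 0 ≤ (1 - ‖(0 : Fin n → ℂ) i‖^2) *
            ‖pderivAt n i f 0‖ := by
          simp
        linarith
      have h3 := hM i z hz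
      show ([i].map fun k => (1 - ‖z k‖^2)).prod *
        ‖pderivAt n i (mderiv n [] f) z‖ ≤ 4^1 * M
      have h4 : ([i].map fun k => (1 - ‖z k‖^2)).prod =
          (1 - ‖z i‖^2) := by simp
      rw [h4]
      show (1 - ‖z i‖^2) * ‖pderivAt n i f z‖ ≤ 4^1 * M
      calc (1 - ‖z i‖^2) * ‖pderivAt n i f z‖ ≤ M := h3
        _ ≤ 4^1 * M := by linarith
    · have h4 := cauchy_step sh hiL (est hL) z hz
      show ((i :: L).map fun k => (1 - ‖z k‖^2)).prod *
        ‖pderivAt n i (mderiv n L f) z‖ ≤ 4^(L.length + 1) * M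
      calc ((i :: L).map fun k => (1 - ‖z k‖^2)).prod *
          ‖pderivAt n i (mderiv n L f) z‖ ≤ 4 * (4^(L.length) * M) := h4
        _ = 4^(L.length + 1) * M := by ring

/-- Mixed-derivative estimate for functions of the sum Bloch space:
`(∏_{k∈J}(1-|z_k|²))·|∂_J f(z)| ≲ ‖f‖_𝔹`. -/
theorem sum_bloch_mixed_derivative_estimate (n : ℕ) (J : Finset (Fin n)) (hJ : J ≠ ∅) :
    ∃ C : ℝ, 0 < C ∧
      ∀ f : (Fin n → ℂ) → ℂ, DifferentiableOn ℂ f (polydisc n) →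
        ∀ B : ℝ, (∀ z ∈ polydisc n, sumBlochExpr n f z ≤ B) →
          ∀ z ∈ polydisc n,
            (∏ k ∈ J, (1 - ‖z k‖ ^ 2)) *
              ‖mderiv n J.toList f z‖ ≤ C * B := by

  refine ⟨(4:ℝ)^(J.card), by positivity, ?_⟩
  intro f hf B hB z hz
  have hSHf : SH n f := SH_base hf
  have hlBf : locB n f := locB_base hf.continuousOn
  have hM : ∀ (j : Fin n) (y : Fin n → ℂ), y ∈ polydisc n →
      (1 - ‖y j‖^2) * ‖pderivAt n j f y‖ ≤ B := by
    intro j y hy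
    have h1 := hB y hy
    rw [sumBlochExpr] at h1
    have h2 : (1 - ‖y j‖^2) * ‖pderivAt n j f y‖ ≤
        ∑ k, (1 - ‖y k‖^2) * ‖pderivAt n k f y‖ := by
      apply Finset.single_le_sum
        (f := fun k => (1 - ‖y k‖^2) * ‖pderivAt n k f y‖)
        ?_ (Finset.mem_univ j)
      intro k _
      have h3 := hy k
      have h5 : 0 ≤ ‖y k‖ := norm_nonneg _
      have h4 : 0 ≤ 1 - ‖y k‖^2 := by nlinarith
      positivity
    have h4 : (0:ℝ) ≤ ‖f 0‖ := norm_nonneg _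
    linarith
  obtain ⟨_, est⟩ := main_est hSHf hlBf hM J.toList (Finset.nodup_toList J)
  have hLne : J.toList ≠ [] := by
    rw [Ne, Finset.toList_eq_nil]
    exact hJ
  have h5 := est hLne z hz
  have hprod : (J.toList.map fun k => (1 - ‖z k‖^2)).prod =
      ∏ k ∈ J, (1 - ‖z k‖^2) := by
    rw [← List.prod_toFinset _ (Finset.nodup_toList J), Finset.toList_toFinset]
  have hlen : J.toList.length = J.card := Finset.length_toList J
  rw [hprod, hlen] at h5
  exact h5
end

section
/- If φ is a multiplier of the product Bloch space B(D^n) with n ≥ 2, then for each fixed w ∈ D, the slice function z ↦ φ(z, w) is a multiplier of B(D^{n-1}), with multiplier norm bounded by C·‖M_φ‖ uniformly in w. -/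
open Complex Finset

lemma polydisc_open (m : ℕ) : IsOpen (polydisc m) := by
  have : polydisc m = ⋂ j, (fun z : Fin m → ℂ => z j) ⁻¹' (Metric.ball 0 1) := by
    ext z; simp [polydisc, Metric.mem_ball, Complex.dist_eq]
  rw [this]
  exact isOpen_iInter_of_finite fun j => (Metric.isOpen_ball).preimage (continuous_apply j)

lemma zero_mem_polydisc (m : ℕ) : (0 : Fin m → ℂ) ∈ polydisc m := by
  intro j; simp

lemma init_mem_polydisc {m : ℕ} {y : Fin (m+1) → ℂ} (hy : y ∈ polydisc (m+1)) :
    Fin.init y ∈ polydisc m := fun j => hy (Fin.castSucc j)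

lemma snoc_mem_polydisc {m : ℕ} {z : Fin m → ℂ} {w : ℂ} (hz : z ∈ polydisc m)
    (hw : ‖w‖ < 1) : (Fin.snoc z w : Fin (m+1) → ℂ) ∈ polydisc (m+1) := by
  intro j
  induction j using Fin.lastCases with
  | last => rwa [Fin.snoc_last]
  | cast i => rw [Fin.snoc_castSucc]; exact hz i

lemma differentiable_update {m : ℕ} (y : Fin m → ℂ) (j : Fin m) :
    Differentiable ℂ (fun u : ℂ => Function.update y j u) := by
  apply differentiable_pi.mpr
  intro k
  simp only [Function.update_apply]
  by_cases h : k = j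
  · simp [h]
  · simp [h]

lemma differentiable_snoc {m : ℕ} (w : ℂ) :
    Differentiable ℂ (fun z : Fin m → ℂ => (Fin.snoc z w : Fin (m+1) → ℂ)) := by
  apply differentiable_pi.mpr
  intro k
  induction k using Fin.lastCases with
  | last => simp only [Fin.snoc_last]; exact differentiable_const _
  | cast i =>
    simp only [Fin.snoc_castSucc]
    exact (ContinuousLinearMap.proj i : (Fin m → ℂ) →L[ℂ] ℂ).differentiable

lemma mderiv_append {m : ℕ} (l₁ l₂ : List (Fin m)) (f : (Fin m → ℂ) → ℂ) :
    mderiv m (l₁ ++ l₂) f = mderiv m l₁ (mderiv m l₂ f) := by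
  induction l₁ with
  | nil => rfl
  | cons j l ih => simp [mderiv, ih]

lemma finRange_succ_snoc (n : ℕ) :
    List.finRange (n+1) = ((List.finRange n).map Fin.castSucc) ++ [Fin.last n] := by
  induction n with
  | zero => decide
  | succ n ih =>
    have hcs : (Fin.succ ∘ Fin.castSucc : Fin n → Fin (n+2)) = Fin.castSucc ∘ Fin.succ :=
      funext fun i => (Fin.succ_castSucc i)
    calc List.finRange (n+2) = 0 :: (List.finRange (n+1)).map Fin.succ := List.finRange_succ
      _ = 0 :: ((List.finRange n).map Fin.castSucc ++ [Fin.last n]).map Fin.succ := by rw [ih]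
      _ = (0 :: (List.finRange n).map Fin.succ).map Fin.castSucc ++ [Fin.last (n+1)] := by
          simp [List.map_map, hcs, Fin.succ_last, Fin.castSucc_zero]
      _ = ((List.finRange (n+1)).map Fin.castSucc) ++ [Fin.last (n+1)] := by
          rw [← List.finRange_succ]

lemma mderiv_last_step {m : ℕ} (F : (Fin (m+1) → ℂ) → ℂ) :
    mderiv (m+1) (List.finRange (m+1)) F
      = mderiv (m+1) ((List.finRange m).map Fin.castSucc)
          (pderivAt (m+1) (Fin.last m) F) := by
  rw [finRange_succ_snoc, mderiv_append]
  rfl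

lemma mderiv_slice {n : ℕ} (w : ℂ) (l : List (Fin n)) :
    ∀ (F : (Fin (n+1) → ℂ) → ℂ) (z : Fin n → ℂ),
      mderiv (n+1) (l.map Fin.castSucc) F (Fin.snoc z w)
        = mderiv n l (fun z' => F (Fin.snoc z' w)) z := by
  induction l with
  | nil => intro F z; rfl
  | cons j l ih =>
    intro F z
    simp only [List.map_cons, mderiv, pderivAt, Fin.snoc_castSucc]
    congr 1
    funext u
    rw [← Fin.snoc_update, ih F (Function.update z j u)]

lemma mderiv_congr {m : ℕ} {U : Set (Fin m → ℂ)} (hU : IsOpen U)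
    {F G : (Fin m → ℂ) → ℂ} (h : ∀ y ∈ U, F y = G y) :
    ∀ (l : List (Fin m)), ∀ y ∈ U, mderiv m l F y = mderiv m l G y := by
  intro l
  induction l with
  | nil => exact h
  | cons j l ih =>
    intro y hy
    simp only [mderiv, pderivAt]
    apply Filter.EventuallyEq.deriv_eq
    have hc : Continuous (fun u : ℂ => Function.update y j u) :=
      (differentiable_update y j).continuous
    have hmem : {u : ℂ | Function.update y j u ∈ U} ∈ nhds (y j) := by
      apply (hU.preimage hc).mem_nhds
      show Function.update y j (y j) ∈ U
      rwa [Function.update_eq_self]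
    filter_upwards [hmem] with u hu using ih _ hu

lemma mderiv_const_mul {m : ℕ} (c : ℂ) (l : List (Fin m)) (F : (Fin m → ℂ) → ℂ) :
    mderiv m l (fun y => c * F y) = fun y => c * mderiv m l F y := by
  induction l with
  | nil => rfl
  | cons j l ih =>
    simp only [mderiv, ih]
    funext y
    simp only [pderivAt]
    exact deriv_const_mul_field c

lemma mderiv_prod : ∀ (n : ℕ) (y : Fin n → ℂ),
    mderiv n (List.finRange n) (fun z => ∏ j, z j) y = 1 := by
  intro n
  induction n with
  | zero =>
    intro y
    rw [List.finRange_zero]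
    show (∏ j : Fin 0, y j) = 1
    simp
  | succ n ih =>
    intro y
    rw [mderiv_last_step]
    have h1 : pderivAt (n+1) (Fin.last n) (fun z : Fin (n+1) → ℂ => ∏ j, z j)
        = fun y => ∏ j : Fin n, y (Fin.castSucc j) := by
      funext y
      simp only [pderivAt]
      have : (fun u : ℂ => ∏ j, Function.update y (Fin.last n) u j)
          = fun u : ℂ => (∏ j : Fin n, y (Fin.castSucc j)) * u := by
        funext u
        rw [Fin.prod_univ_castSucc]
        congr 1
        · apply Finset.prod_congr rfl
          intro j _
          exact Function.update_of_ne (Fin.castSucc_lt_last j).ne _ _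
        · exact Function.update_self _ _ _
      rw [this, deriv_const_mul_field, deriv_id'']
      ring
    rw [h1]
    conv_lhs => rw [← Fin.snoc_init_self y]
    rw [mderiv_slice]
    have h2 : (fun z' : Fin n → ℂ => ∏ j : Fin n, (Fin.snoc z' (y (Fin.last n)) : Fin (n+1) → ℂ) (Fin.castSucc j))
        = fun z' : Fin n → ℂ => ∏ j, z' j := by
      funext z'
      exact Finset.prod_congr rfl fun j _ => Fin.snoc_castSucc _ _ _
    rw [h2, ih]

lemma mderiv_monomial : ∀ (n : ℕ) (ψ : (Fin n → ℂ) → ℂ),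
    DifferentiableOn ℂ ψ (polydisc n) →
    mderiv n (List.finRange n) (fun z => (∏ j, z j) * ψ z) 0 = ψ 0 := by
  intro n
  induction n with
  | zero =>
    intro ψ hψ
    rw [List.finRange_zero]
    show (∏ j : Fin 0, (0:Fin 0 → ℂ) j) * ψ 0 = ψ 0
    simp
  | succ n ih =>
    intro ψ hψ
    rw [mderiv_last_step]
    -- product rule in the last variable, valid on the polydisc
    set R : (Fin (n+1) → ℂ) → ℂ := fun y =>
      (∏ j : Fin n, y (Fin.castSucc j)) *
        (ψ y + y (Fin.last n) * pderivAt (n+1) (Fin.last n) ψ y) with hR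
    have hpd : ∀ y ∈ polydisc (n+1),
        pderivAt (n+1) (Fin.last n) (fun z => (∏ j, z j) * ψ z) y = R y := by
      intro y hy
      have hψy : DifferentiableAt ℂ ψ y :=
        (hψ y hy).differentiableAt ((polydisc_open (n+1)).mem_nhds hy)
      have hslice : DifferentiableAt ℂ (fun u : ℂ => ψ (Function.update y (Fin.last n) u))
          (y (Fin.last n)) := by
        have h' : DifferentiableAt ℂ ψ (Function.update y (Fin.last n) (y (Fin.last n))) := by
          rwa [Function.update_eq_self]
        exact h'.comp _ ((differentiable_update y (Fin.last n)) _)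
      simp only [pderivAt]
      have heq : (fun u : ℂ => (∏ j, Function.update y (Fin.last n) u j) * ψ (Function.update y (Fin.last n) u))
          = fun u : ℂ => (∏ j : Fin n, y (Fin.castSucc j)) *
              (u * ψ (Function.update y (Fin.last n) u)) := by
        funext u
        rw [Fin.prod_univ_castSucc]
        have h1 : ∀ j : Fin n, Function.update y (Fin.last n) u (Fin.castSucc j) = y (Fin.castSucc j) :=
          fun j => Function.update_of_ne (Fin.castSucc_lt_last j).ne _ _
        rw [Finset.prod_congr rfl fun j _ => h1 j, Function.update_self]
        ring
      rw [heq, deriv_const_mul_field]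
      rw [deriv_fun_mul differentiableAt_fun_id hslice]
      simp only [deriv_id'', one_mul, Function.update_eq_self, hR, pderivAt]
    have h0 : (0 : Fin (n+1) → ℂ) ∈ polydisc (n+1) := zero_mem_polydisc _
    rw [mderiv_congr (polydisc_open (n+1)) hpd _ _ h0]
    have h00 : (0 : Fin (n+1) → ℂ) = Fin.snoc (0 : Fin n → ℂ) (0:ℂ) := by
      funext i
      induction i using Fin.lastCases with
      | last => simp
      | cast j => simp
    rw [h00, mderiv_slice]
    have h2 : (fun z' : Fin n → ℂ => R (Fin.snoc z' 0))
        = fun z' => (∏ j, z' j) * (ψ (Fin.snoc z' 0)) := by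
      funext z'
      simp only [hR, Fin.snoc_castSucc, Fin.snoc_last, zero_mul, add_zero]
    rw [h2]
    have hχ : DifferentiableOn ℂ (fun z' : Fin n → ℂ => ψ (Fin.snoc z' 0)) (polydisc n) := by
      intro z hz
      have : DifferentiableAt ℂ (fun z' : Fin n → ℂ => ψ (Fin.snoc z' 0)) z := by
        have hψy : DifferentiableAt ℂ ψ (Fin.snoc z 0) :=
          (hψ _ (snoc_mem_polydisc hz (by simp))).differentiableAt
            ((polydisc_open (n+1)).mem_nhds (snoc_mem_polydisc hz (by simp)))
        exact hψy.comp z ((differentiable_snoc 0) z)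
      exact this.differentiableWithinAt
    rw [ih _ hχ, ← h00]

noncomputable def mob (w ζ : ℂ) : ℂ := (ζ - w) / (1 - (starRingEnd ℂ) w * ζ)

lemma mob_den_ne {w ζ : ℂ} (hw : ‖w‖ < 1) (hζ : ‖ζ‖ < 1) :
    (1 : ℂ) - (starRingEnd ℂ) w * ζ ≠ 0 := by
  intro h
  have h1 : (1 : ℂ) = (starRingEnd ℂ) w * ζ := by linear_combination h
  have := congrArg (fun x : ℂ => ‖x‖) h1
  simp only [norm_mul, norm_one, Complex.norm_conj] at this
  nlinarith [norm_nonneg w, norm_nonneg ζ]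

lemma mob_self (w : ℂ) : mob w w = 0 := by simp [mob]

lemma mob_zero (w : ℂ) : mob w 0 = -w := by simp [mob]

lemma abs_mob_zero_le (w : ℂ) : ‖mob w 0‖ ≤ ‖w‖ := by
  rw [mob_zero]; simp

lemma mob_differentiableAt {w ζ : ℂ} (hw : ‖w‖ < 1) (hζ : ‖ζ‖ < 1) :
    DifferentiableAt ℂ (mob w) ζ := by
  apply DifferentiableAt.div
  · exact (differentiableAt_fun_id.sub (differentiableAt_const w))
  · exact (differentiableAt_const _).sub ((differentiableAt_const _).mul differentiableAt_fun_id)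
  · exact mob_den_ne hw hζ

lemma deriv_mob {w ζ : ℂ} (hw : ‖w‖ < 1) (hζ : ‖ζ‖ < 1) :
    deriv (mob w) ζ = (1 - (starRingEnd ℂ) w * w) / (1 - (starRingEnd ℂ) w * ζ)^2 := by
  have hden := mob_den_ne hw hζ
  have h := deriv_fun_div (c := fun ζ : ℂ => ζ - w) (d := fun ζ : ℂ => 1 - (starRingEnd ℂ) w * ζ)
    (x := ζ) (differentiableAt_fun_id.sub (differentiableAt_const w))
    ((differentiableAt_const _).sub ((differentiableAt_const _).mul differentiableAt_fun_id))
    hden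
  have hc : deriv (fun ζ : ℂ => ζ - w) ζ = 1 := by
    simp [deriv_sub differentiableAt_fun_id (differentiableAt_const w)]
  have hd : deriv (fun ζ : ℂ => 1 - (starRingEnd ℂ) w * ζ) ζ = -((starRingEnd ℂ) w) := by
    rw [deriv_fun_sub (differentiableAt_const _) ((differentiableAt_const _).mul differentiableAt_fun_id)]
    rw [deriv_const, deriv_const_mul_field]
    simp
  rw [show mob w = fun ζ : ℂ => (ζ - w)/(1 - (starRingEnd ℂ) w * ζ) from rfl, h, hc, hd]
  field_simp
  ring

lemma abs_one_sub_conj_mul_ge {w ζ : ℂ} :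
    1 - ‖w‖ * ‖ζ‖ ≤ ‖1 - (starRingEnd ℂ) w * ζ‖ := by
  have h := norm_sub_norm_le (1 : ℂ) ((starRingEnd ℂ) w * ζ)
  simpa [norm_mul, Complex.norm_conj] using h

lemma abs_deriv_mob_le {w ζ : ℂ} (hw : ‖w‖ < 1) (hζ : ‖ζ‖ < 1) :
    (1 - ‖ζ‖ ^ 2) * ‖deriv (mob w) ζ‖ ≤ 4 := by
  rw [deriv_mob hw hζ]
  rw [norm_div, norm_pow]
  have hnum : ‖1 - (starRingEnd ℂ) w * w‖ = 1 - ‖w‖ ^ 2 := by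
    have : (1 : ℂ) - (starRingEnd ℂ) w * w = ((1 - ‖w‖ ^ 2 : ℝ) : ℂ) := by
      rw [Complex.sq_norm]
      push_cast
      rw [← Complex.normSq_eq_conj_mul_self]
    rw [this, Complex.norm_real, Real.norm_eq_abs]
    exact abs_of_nonneg (by nlinarith [norm_nonneg w])
  rw [hnum]
  set a := ‖ζ‖ with ha
  set b := ‖w‖ with hb
  set d := ‖1 - (starRingEnd ℂ) w * ζ‖ with hd
  have h1 : 1 - b * a ≤ d := abs_one_sub_conj_mul_ge
  have ha0 : 0 ≤ a := norm_nonneg ζ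
  have hb0 : 0 ≤ b := norm_nonneg w
  have hd0 : 0 < d := lt_of_lt_of_le (by nlinarith) h1
  have hab : 0 ≤ 1 - a * b := by nlinarith
  have hd2 : (1 - a*b)^2 ≤ d^2 := by nlinarith
  have q1 : 1 - a ≤ 1 - a*b := by nlinarith
  have q2 : 1 - b ≤ 1 - a*b := by nlinarith
  have e1 : (1-a)*(1-b) ≤ (1-a*b)*(1-a*b) :=
    mul_le_mul q1 q2 (by linarith) (by linarith)
  have key : (1 - a^2) * (1 - b^2) ≤ 4 * d^2 := by nlinarith
  calc (1 - a^2) * ((1 - b^2) / d^2) = ((1 - a^2) * (1 - b^2)) / d^2 := by ring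
    _ ≤ 4 := by rw [div_le_iff₀ (by positivity)]; linarith

lemma deriv_mob_self {w : ℂ} (hw : ‖w‖ < 1) :
    (1 - ‖w‖ ^ 2) * ‖deriv (mob w) w‖ = 1 := by
  rw [deriv_mob hw hw]
  have hden : (1 : ℂ) - (starRingEnd ℂ) w * w = ((1 - ‖w‖ ^ 2 : ℝ) : ℂ) := by
    rw [Complex.sq_norm]
    push_cast
    rw [← Complex.normSq_eq_conj_mul_self]
  rw [hden]
  have hpos : 0 < 1 - ‖w‖ ^ 2 := by nlinarith [norm_nonneg w]
  rw [norm_div, norm_pow, Complex.norm_real, Real.norm_eq_abs, _root_.abs_of_nonneg hpos.le]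
  field_simp

lemma differentiable_init {m : ℕ} :
    Differentiable ℂ (fun y : Fin (m+1) → ℂ => (Fin.init y : Fin m → ℂ)) := by
  apply differentiable_pi.mpr
  intro j
  exact (ContinuousLinearMap.proj (Fin.castSucc j) : (Fin (m+1) → ℂ) →L[ℂ] ℂ).differentiable

lemma pderiv_last_phi_mul {m : ℕ} (φ : (Fin (m+1) → ℂ) → ℂ)
    (hφ : DifferentiableOn ℂ φ (polydisc (m+1)))
    (c : (Fin (m+1) → ℂ) → ℂ)
    (hc : ∀ (y : Fin (m+1) → ℂ) (u : ℂ), c (Function.update y (Fin.last m) u) = c y)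
    (w : ℂ) (hw : ‖w‖ < 1) :
    ∀ y ∈ polydisc (m+1),
      pderivAt (m+1) (Fin.last m) (fun x => φ x * (c x * mob w (x (Fin.last m)))) y
        = c y * (pderivAt (m+1) (Fin.last m) φ y * mob w (y (Fin.last m))
            + φ y * deriv (mob w) (y (Fin.last m))) := by
  intro y hy
  have hφy : DifferentiableAt ℂ φ y :=
    (hφ y hy).differentiableAt ((polydisc_open _).mem_nhds hy)
  have hslice : DifferentiableAt ℂ (fun u : ℂ => φ (Function.update y (Fin.last m) u))
      (y (Fin.last m)) := by
    have h' : DifferentiableAt ℂ φ (Function.update y (Fin.last m) (y (Fin.last m))) := by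
      rwa [Function.update_eq_self]
    exact h'.comp _ ((differentiable_update y (Fin.last m)) _)
  have hmobd : DifferentiableAt ℂ (mob w) (y (Fin.last m)) :=
    mob_differentiableAt hw (hy (Fin.last m))
  simp only [pderivAt]
  have heq : (fun u : ℂ => φ (Function.update y (Fin.last m) u) *
        (c (Function.update y (Fin.last m) u) * mob w (Function.update y (Fin.last m) u (Fin.last m))))
      = fun u : ℂ => c y * (φ (Function.update y (Fin.last m) u) * mob w u) := by
    funext u
    rw [hc, Function.update_self]
    ring
  rw [heq, deriv_const_mul_field, deriv_fun_mul hslice hmobd, Function.update_eq_self]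

lemma pderiv_last_c_mul {m : ℕ} (c : (Fin (m+1) → ℂ) → ℂ)
    (hc : ∀ (y : Fin (m+1) → ℂ) (u : ℂ), c (Function.update y (Fin.last m) u) = c y)
    (w : ℂ) (y : Fin (m+1) → ℂ) :
    pderivAt (m+1) (Fin.last m) (fun x => c x * mob w (x (Fin.last m))) y
      = c y * deriv (mob w) (y (Fin.last m)) := by
  simp only [pderivAt]
  have heq : (fun u : ℂ => c (Function.update y (Fin.last m) u) *
        mob w (Function.update y (Fin.last m) u (Fin.last m))) = fun u => c y * mob w u := by
    funext u; rw [hc, Function.update_self]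
  rw [heq, deriv_const_mul_field]

lemma mderiv_test {m : ℕ} (γ : (Fin m → ℂ) → ℂ) (w : ℂ) (y : Fin (m+1) → ℂ) :
    mderiv (m+1) (List.finRange (m+1)) (fun x => γ (Fin.init x) * mob w (x (Fin.last m))) y
      = deriv (mob w) (y (Fin.last m)) * mderiv m (List.finRange m) γ (Fin.init y) := by
  rw [mderiv_last_step]
  have h1 : pderivAt (m+1) (Fin.last m) (fun x => γ (Fin.init x) * mob w (x (Fin.last m)))
      = fun y => γ (Fin.init y) * deriv (mob w) (y (Fin.last m)) :=
    funext fun y => pderiv_last_c_mul (fun x => γ (Fin.init x))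
      (fun y u => by
        show γ (Fin.init (Function.update y (Fin.last m) u)) = γ (Fin.init y)
        rw [Fin.init_update_last]) w y
  rw [h1]
  conv_lhs => rw [← Fin.snoc_init_self y]
  rw [mderiv_slice]
  have h2 : (fun z' : Fin m → ℂ => γ (Fin.init (Fin.snoc z' (y (Fin.last m)) : Fin (m+1) → ℂ))
        * deriv (mob w) ((Fin.snoc z' (y (Fin.last m)) : Fin (m+1) → ℂ) (Fin.last m)))
      = fun z' => deriv (mob w) (y (Fin.last m)) * γ z' := by
    funext z'; rw [Fin.init_snoc, Fin.snoc_last]; ring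
  rw [h2, mderiv_const_mul]

lemma prod_one_sub_sq_nonneg {m : ℕ} {y : Fin m → ℂ} (hy : y ∈ polydisc m) :
    (0:ℝ) ≤ ∏ j, (1 - ‖y j‖ ^ 2) :=
  Finset.prod_nonneg fun j _ => by nlinarith [hy j, norm_nonneg (y j)]

lemma test_diff {m : ℕ} (γ : (Fin m → ℂ) → ℂ) (hγ : DifferentiableOn ℂ γ (polydisc m))
    (w : ℂ) (hw : ‖w‖ < 1) :
    DifferentiableOn ℂ (fun x => γ (Fin.init x) * mob w (x (Fin.last m))) (polydisc (m+1)) := by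
  intro y hy
  apply DifferentiableAt.differentiableWithinAt
  apply DifferentiableAt.mul
  · exact ((hγ _ (init_mem_polydisc hy)).differentiableAt
      ((polydisc_open m).mem_nhds (init_mem_polydisc hy))).comp y (differentiable_init y)
  · exact (mob_differentiableAt hw (hy (Fin.last m))).comp y
      ((ContinuousLinearMap.proj (Fin.last m) : (Fin (m+1) → ℂ) →L[ℂ] ℂ).differentiable y)

lemma test_bound {m : ℕ} (γ : (Fin m → ℂ) → ℂ) (w : ℂ) (hw : ‖w‖ < 1) (K : ℝ)
    (h0 : ‖γ 0‖ ≤ K)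
    (hd : ∀ z ∈ polydisc m,
      (∏ j, (1 - ‖z j‖ ^ 2)) * ‖mderiv m (List.finRange m) γ z‖ ≤ K) :
    ∀ y ∈ polydisc (m+1),
      prodBlochExpr (m+1) (fun x => γ (Fin.init x) * mob w (x (Fin.last m))) y ≤ 5 * K := by
  intro y hy
  have hK : 0 ≤ K := le_trans (norm_nonneg _) h0
  simp only [prodBlochExpr]
  rw [mderiv_test γ w y, norm_mul, Fin.prod_univ_castSucc,
    norm_mul (deriv (mob w) (y (Fin.last m))) (mderiv m (List.finRange m) γ (Fin.init y))]
  have habs0 : ‖γ (Fin.init (0 : Fin (m+1) → ℂ))‖ * ‖mob w ((0 : Fin (m+1) → ℂ) (Fin.last m))‖ ≤ K := by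
    have hi : Fin.init (0 : Fin (m+1) → ℂ) = 0 := funext fun j => rfl
    rw [hi]
    have hz : ((0 : Fin (m+1) → ℂ) (Fin.last m)) = 0 := rfl
    rw [hz, mob_zero]
    have h1 : ‖-w‖ ≤ 1 := by
      rw [norm_neg]
      exact hw.le
    calc ‖γ 0‖ * ‖-w‖ ≤ K * 1 :=
          mul_le_mul h0 h1 (norm_nonneg _) hK
      _ = K := mul_one K
  have hA1 := hd (Fin.init y) (init_mem_polydisc hy)
  have hA2 := abs_deriv_mob_le hw (hy (Fin.last m))
  have hprodnn : (0:ℝ) ≤ ∏ j : Fin m, (1 - ‖Fin.init y j‖ ^ 2) :=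
    prod_one_sub_sq_nonneg (init_mem_polydisc hy)
  have e2 : ((∏ j : Fin m, (1 - ‖y (Fin.castSucc j)‖ ^ 2)) * (1 - ‖y (Fin.last m)‖ ^ 2)) *
        (‖deriv (mob w) (y (Fin.last m))‖ * ‖mderiv m (List.finRange m) γ (Fin.init y)‖)
      = ((1 - ‖y (Fin.last m)‖ ^ 2) * ‖deriv (mob w) (y (Fin.last m))‖) *
        ((∏ j : Fin m, (1 - ‖Fin.init y j‖ ^ 2)) * ‖mderiv m (List.finRange m) γ (Fin.init y)‖) := by
    have hp : (∏ j : Fin m, (1 - ‖y (Fin.castSucc j)‖ ^ 2))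
        = ∏ j : Fin m, (1 - ‖Fin.init y j‖ ^ 2) := rfl
    rw [hp]; ring
  rw [e2]
  have h4 : ((1 - ‖y (Fin.last m)‖ ^ 2) * ‖deriv (mob w) (y (Fin.last m))‖) *
        ((∏ j : Fin m, (1 - ‖Fin.init y j‖ ^ 2)) * ‖mderiv m (List.finRange m) γ (Fin.init y)‖)
      ≤ 4 * K :=
    mul_le_mul hA2 hA1 (mul_nonneg hprodnn (norm_nonneg _)) (by norm_num)
  linarith [habs0]

lemma key_phi_common {m : ℕ} (φ : (Fin (m+1) → ℂ) → ℂ)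
    (hφ : DifferentiableOn ℂ φ (polydisc (m+1))) (γ : (Fin m → ℂ) → ℂ)
    (w : ℂ) (hw : ‖w‖ < 1) (z : Fin m → ℂ) (hz : z ∈ polydisc m) :
    mderiv (m+1) (List.finRange (m+1))
        (φ * (fun x => γ (Fin.init x) * mob w (x (Fin.last m)))) (Fin.snoc z w)
      = mderiv m (List.finRange m) (fun z' => γ z' * (φ (Fin.snoc z' w) * deriv (mob w) w)) z := by
  rw [mderiv_last_step]
  have hR : ∀ y ∈ polydisc (m+1),
      pderivAt (m+1) (Fin.last m) (φ * (fun x => γ (Fin.init x) * mob w (x (Fin.last m)))) y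
        = (fun y => γ (Fin.init y) * (pderivAt (m+1) (Fin.last m) φ y * mob w (y (Fin.last m))
            + φ y * deriv (mob w) (y (Fin.last m)))) y :=
    pderiv_last_phi_mul φ hφ (fun x => γ (Fin.init x))
      (fun y u => by
        show γ (Fin.init (Function.update y (Fin.last m) u)) = γ (Fin.init y)
        rw [Fin.init_update_last]) w hw
  rw [mderiv_congr (polydisc_open (m+1)) hR ((List.finRange m).map Fin.castSucc) _
    (snoc_mem_polydisc hz hw), mderiv_slice]
  congr 1
  funext z'
  simp only [Fin.init_snoc, Fin.snoc_last, mob_self, mul_zero, zero_add]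

set_option maxHeartbeats 1000000 in
/-- If `φ` multiplies `B(Dⁿ⁺¹)` (with `n+1 ≥ 2`), then every slice `φ(·, w)`, `w ∈ D`,
multiplies `B(Dⁿ)`, with multiplier norm `≤ C·‖M_φ‖` uniformly in `w`. -/
theorem prod_bloch_multiplier_slice (n : ℕ) (hn : 1 ≤ n) :
    ∃ C : ℝ, 0 < C ∧
      ∀ φ : (Fin (n + 1) → ℂ) → ℂ, DifferentiableOn ℂ φ (polydisc (n + 1)) →
        ∀ A : ℝ,
          (∀ f : (Fin (n + 1) → ℂ) → ℂ, DifferentiableOn ℂ f (polydisc (n + 1)) →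
            ∀ B : ℝ, (∀ z ∈ polydisc (n + 1), prodBlochExpr (n + 1) f z ≤ B) →
              ∀ z ∈ polydisc (n + 1), prodBlochExpr (n + 1) (φ * f) z ≤ A * B) →
          ∀ w : ℂ, ‖w‖ < 1 →
            ∀ g : (Fin n → ℂ) → ℂ, DifferentiableOn ℂ g (polydisc n) →
              ∀ B : ℝ, (∀ z ∈ polydisc n, prodBlochExpr n g z ≤ B) →
                ∀ z ∈ polydisc n,
                  prodBlochExpr n ((fun z : Fin n → ℂ => φ (Fin.snoc z w)) * g) z
                    ≤ C * A * B := by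
  refine ⟨10, by norm_num, ?_⟩
  intro φ hφ A hmult w hw g hg B hgB z hz
  -- basic bounds on g
  have hg0 : ‖g 0‖ ≤ B := by
    have h := hgB 0 (zero_mem_polydisc n)
    simp only [prodBlochExpr] at h
    have h2 : (0:ℝ) ≤ (∏ j, (1 - ‖(0 : Fin n → ℂ) j‖ ^ 2)) *
        ‖mderiv n (List.finRange n) g 0‖ :=
      mul_nonneg (prod_one_sub_sq_nonneg (zero_mem_polydisc n)) (norm_nonneg _)
    linarith
  have hB : (0:ℝ) ≤ B := le_trans (norm_nonneg _) hg0
  have hgd : ∀ z' ∈ polydisc n,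
      (∏ j, (1 - ‖z' j‖ ^ 2)) * ‖mderiv n (List.finRange n) g z'‖ ≤ B := by
    intro z' hz'
    have h := hgB z' hz'
    simp only [prodBlochExpr] at h
    have := norm_nonneg (g 0)
    linarith
  have hdw : (1 - ‖w‖ ^ 2) * ‖deriv (mob w) w‖ = 1 := deriv_mob_self hw
  -- the second test coefficient
  have hγ3d : DifferentiableOn ℂ (fun z' : Fin n → ℂ => g 0 * ∏ j, z' j) (polydisc n) := by
    apply Differentiable.differentiableOn
    have hp : Differentiable ℂ (fun z' : Fin n → ℂ => ∏ j : Fin n, z' j) := by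
      intro x
      have hh : ∀ i ∈ (Finset.univ : Finset (Fin n)),
          HasFDerivAt (fun z' : Fin n → ℂ => z' i)
            (ContinuousLinearMap.proj i : (Fin n → ℂ) →L[ℂ] ℂ) x :=
        fun i _ => (ContinuousLinearMap.proj i : (Fin n → ℂ) →L[ℂ] ℂ).hasFDerivAt
      exact (HasFDerivAt.finset_prod hh).differentiableAt
    exact (differentiable_const _).mul hp
  have hγ30 : ‖(fun z' : Fin n → ℂ => g 0 * ∏ j, z' j) 0‖ ≤ B := by
    have : (∏ j : Fin n, (0 : Fin n → ℂ) j) = 0 := by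
      simp only [Pi.zero_apply]
      rw [Finset.prod_const, zero_pow]
      simpa using Nat.one_le_iff_ne_zero.mp hn
    simp only [this, mul_zero, norm_zero]
    exact hB
  have hγ3deriv : ∀ z' ∈ polydisc n,
      (∏ j, (1 - ‖z' j‖ ^ 2)) *
        ‖mderiv n (List.finRange n) (fun z' : Fin n → ℂ => g 0 * ∏ j, z' j) z'‖ ≤ B := by
    intro z' hz'
    have hmd : mderiv n (List.finRange n) (fun z' : Fin n → ℂ => g 0 * ∏ j, z' j) z' = g 0 := by
      rw [mderiv_const_mul (g 0) (List.finRange n) (fun q : Fin n → ℂ => ∏ j, q j)]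
      show g 0 * mderiv n (List.finRange n) (fun q : Fin n → ℂ => ∏ j, q j) z' = g 0
      rw [mderiv_prod n z', mul_one]
    rw [hmd]
    have hple : (∏ j, (1 - ‖z' j‖ ^ 2)) ≤ 1 :=
      Finset.prod_le_one (fun j _ => by nlinarith [hz' j, norm_nonneg (z' j)])
        (fun j _ => by nlinarith [hz' j, norm_nonneg (z' j)])
    calc (∏ j, (1 - ‖z' j‖ ^ 2)) * ‖g 0‖
        ≤ 1 * B := mul_le_mul hple hg0 (norm_nonneg _) zero_le_one
      _ = B := one_mul B
  -- invoke the multiplier hypothesis on the two test functions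
  have Hf2 := hmult (fun x => g (Fin.init x) * mob w (x (Fin.last n)))
    (test_diff g hg w hw) (5 * B) (test_bound g w hw B hg0 hgd)
    (Fin.snoc z w) (snoc_mem_polydisc hz hw)
  have htd := test_diff (fun z' : Fin n → ℂ => g 0 * ∏ j, z' j) hγ3d w hw
  have htb := test_bound (fun z' : Fin n → ℂ => g 0 * ∏ j, z' j) w hw B hγ30 hγ3deriv
  have Hf3 := hmult (fun x => (fun z' : Fin n → ℂ => g 0 * ∏ j, z' j) (Fin.init x) * mob w (x (Fin.last n)))
    htd (5 * B) htb (Fin.snoc (0 : Fin n → ℂ) w) (snoc_mem_polydisc (zero_mem_polydisc n) hw)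
  -- compute the mixed derivative appearing in Hf2
  have key2 : mderiv (n+1) (List.finRange (n+1))
      (φ * (fun x => g (Fin.init x) * mob w (x (Fin.last n)))) (Fin.snoc z w)
      = deriv (mob w) w *
          mderiv n (List.finRange n) ((fun z' : Fin n → ℂ => φ (Fin.snoc z' w)) * g) z := by
    rw [key_phi_common φ hφ g w hw z hz]
    have e : (fun z' : Fin n → ℂ => g z' * (φ (Fin.snoc z' w) * deriv (mob w) w))
        = fun z' => deriv (mob w) w * (((fun z'' : Fin n → ℂ => φ (Fin.snoc z'' w)) * g) z') := by
      funext z'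
      simp only [Pi.mul_apply]
      ring
    rw [e, mderiv_const_mul]
  -- compute the mixed derivative appearing in Hf3
  have key3 : mderiv (n+1) (List.finRange (n+1))
      (φ * (fun x => (fun z' : Fin n → ℂ => g 0 * ∏ j, z' j) (Fin.init x) * mob w (x (Fin.last n))))
      (Fin.snoc (0 : Fin n → ℂ) w)
      = g 0 * deriv (mob w) w * φ (Fin.snoc (0 : Fin n → ℂ) w) := by
    refine (key_phi_common φ hφ (fun z' : Fin n → ℂ => g 0 * ∏ j, z' j) w hw
      (0 : Fin n → ℂ) (zero_mem_polydisc n)).trans ?_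
    have e : (fun z' : Fin n → ℂ => (fun z'' : Fin n → ℂ => g 0 * ∏ j, z'' j) z' *
          (φ (Fin.snoc z' w) * deriv (mob w) w))
        = fun z' => (∏ j, z' j) *
            ((fun z'' : Fin n → ℂ => g 0 * deriv (mob w) w * φ (Fin.snoc z'' w)) z') := by
      funext z'
      ring
    rw [e, mderiv_monomial n _ ?hd]
    case hd =>
      intro z' hz'
      apply DifferentiableAt.differentiableWithinAt
      apply (differentiableAt_const _).mul
      have hmem := snoc_mem_polydisc hz' hw
      exact ((hφ _ hmem).differentiableAt ((polydisc_open (n+1)).mem_nhds hmem)).comp z'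
        (differentiable_snoc w z')
  -- extract the derivative-term bound from Hf2
  have ew : (∏ j : Fin (n+1), (1 - ‖(Fin.snoc z w : Fin (n+1) → ℂ) j‖ ^ 2))
      = (∏ j : Fin n, (1 - ‖z j‖ ^ 2)) * (1 - ‖w‖ ^ 2) := by
    rw [Fin.prod_univ_castSucc]
    congr 1
    · exact Finset.prod_congr rfl fun j _ => by rw [Fin.snoc_castSucc]
    · rw [Fin.snoc_last]
  have main2 : (∏ j : Fin n, (1 - ‖z j‖ ^ 2)) *
      ‖mderiv n (List.finRange n) ((fun z' : Fin n → ℂ => φ (Fin.snoc z' w)) * g) z‖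
      ≤ A * (5 * B) := by
    simp only [prodBlochExpr] at Hf2
    rw [key2, ew, norm_mul] at Hf2
    have e2 : ((∏ j : Fin n, (1 - ‖z j‖ ^ 2)) * (1 - ‖w‖ ^ 2)) *
          (‖deriv (mob w) w‖ *
            ‖mderiv n (List.finRange n) ((fun z' : Fin n → ℂ => φ (Fin.snoc z' w)) * g) z‖)
        = ((1 - ‖w‖ ^ 2) * ‖deriv (mob w) w‖) *
          ((∏ j : Fin n, (1 - ‖z j‖ ^ 2)) *
            ‖mderiv n (List.finRange n) ((fun z' : Fin n → ℂ => φ (Fin.snoc z' w)) * g) z‖) := by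
      ring
    rw [e2, hdw, one_mul] at Hf2
    have := norm_nonneg
      ((φ * (fun x : Fin (n+1) → ℂ => g (Fin.init x) * mob w (x (Fin.last n)))) 0)
    linarith
  -- extract the constant-term bound from Hf3
  have ew0 : (∏ j : Fin (n+1), (1 - ‖(Fin.snoc (0 : Fin n → ℂ) w : Fin (n+1) → ℂ) j‖ ^ 2))
      = 1 - ‖w‖ ^ 2 := by
    rw [Fin.prod_univ_castSucc]
    have h1 : (∏ j : Fin n, (1 - ‖(Fin.snoc (0 : Fin n → ℂ) w : Fin (n+1) → ℂ) (Fin.castSucc j)‖ ^ 2)) = 1 := by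
      rw [Finset.prod_congr rfl fun j _ => by rw [Fin.snoc_castSucc]]
      simp
    rw [h1, Fin.snoc_last, one_mul]
  have main3 : ‖g 0‖ * ‖φ (Fin.snoc (0 : Fin n → ℂ) w)‖ ≤ A * (5 * B) := by
    simp only [prodBlochExpr] at Hf3
    rw [key3, ew0, norm_mul, norm_mul] at Hf3
    have e3 : (1 - ‖w‖ ^ 2) *
          (‖g 0‖ * ‖deriv (mob w) w‖ *
            ‖φ (Fin.snoc (0 : Fin n → ℂ) w)‖)
        = ((1 - ‖w‖ ^ 2) * ‖deriv (mob w) w‖) *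
          (‖g 0‖ * ‖φ (Fin.snoc (0 : Fin n → ℂ) w)‖) := by ring
    rw [e3, hdw, one_mul] at Hf3
    have := norm_nonneg
      ((φ * (fun x : Fin (n+1) → ℂ => (fun z' : Fin n → ℂ => g 0 * ∏ j, z' j) (Fin.init x) * mob w (x (Fin.last n)))) 0)
    linarith
  -- conclude
  simp only [prodBlochExpr, Pi.mul_apply, norm_mul]
  have efinal : (10:ℝ) * A * B = A * (5 * B) + A * (5 * B) := by ring
  rw [efinal]
  have hcomm : ‖φ (Fin.snoc (0 : Fin n → ℂ) w)‖ * ‖g 0‖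
      = ‖g 0‖ * ‖φ (Fin.snoc (0 : Fin n → ℂ) w)‖ := mul_comm _ _
  rw [hcomm]
  linarith [main2, main3]
end
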